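/- Fix κ, κ' with 0 < κ < κ' ≤ 1. Define β⁻ = -(1/4)log(κκ'), β⁺ = -(1/2)log κ, and for β ∈ (β⁻, β⁺) define γ(β) = ( (1/2)·log( (κ'-κ)/(κκ'·e^{2β} - e^{-2β}) ), β, β + (1/2)·log κ ). Then β⁻ < β⁺, the first coordinate is well-defined (i.e. κκ'·e^{2β} - e^{-2β} > 0 for β in this interval), and writing γ(β) = (K(β), K'(β), K''(β)), the quantities w2 = e^{2(K''-K')} and w3 = e^{-2K'}(e^{2K} - e^{2K''})/(e^{2(K+K'')} - 1) are constant along the curve, equal to κ and κ' respectively. -/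

import Mathlib

open Real

theorem curve_construction (κ κ' : ℝ) (h0 : 0 < κ) (h1 : κ < κ') (h2 : κ' ≤ 1) :
    let βm := -(1/4) * Real.log (κ * κ')
    let βp := -(1/2) * Real.log κ
    βm < βp ∧
    ∀ β ∈ Set.Ioo βm βp,
      0 < κ * κ' * Real.exp (2*β) - Real.exp (-2*β) ∧
      (let K := (1/2) * Real.log ((κ' - κ) / (κ * κ' * Real.exp (2*β) - Real.exp (-2*β)))
       let K' := β
       let K'' := β + (1/2) * Real.log κ
       Real.exp (2*(K'' - K')) = κ ∧
       Real.exp (-2*K') * (Real.exp (2*K) - Real.exp (2*K'')) /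
         (Real.exp (2*(K+K'')) - 1) = κ') := by
  have h0' : (0:ℝ) < κ' := h0.trans h1
  have hlog : Real.log κ < Real.log κ' := Real.log_lt_log h0 h1
  have hlogmul : Real.log (κ * κ') = Real.log κ + Real.log κ' :=
    Real.log_mul h0.ne' h0'.ne'
  intro βm βp
  constructor
  · show -(1/4) * Real.log (κ * κ') < -(1/2) * Real.log κ
    rw [hlogmul]; linarith
  · intro β hβ
    obtain ⟨hβ1, hβ2⟩ := hβ
    set e := Real.exp (2*β) with he_def
    set ei := Real.exp (-2*β) with hei_def
    have hepos : 0 < e := Real.exp_pos _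
    have heipos : 0 < ei := Real.exp_pos _
    have hprod : e * ei = 1 := by
      rw [he_def, hei_def, ← Real.exp_add]; norm_num
    -- positivity of D
    have hβ1' : -(1/4) * (Real.log κ + Real.log κ') < β := by
      rw [← hlogmul]; exact hβ1
    have hD : 0 < κ * κ' * e - ei := by
      have h4 : Real.exp (-(Real.log κ + Real.log κ')) < Real.exp (4*β) :=
        Real.exp_lt_exp.mpr (by linarith)
      have : Real.exp (-(Real.log κ + Real.log κ')) = (κ * κ')⁻¹ := by
        rw [Real.exp_neg, Real.exp_add, Real.exp_log h0, Real.exp_log h0']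
      rw [this] at h4
      have h5 : 1 < κ * κ' * Real.exp (4*β) := by
        have hkk : 0 < κ * κ' := mul_pos h0 h0'
        calc (1:ℝ) = κ * κ' * (κ*κ')⁻¹ := by field_simp
        _ < κ * κ' * Real.exp (4*β) := by
            exact (mul_lt_mul_iff_right₀ hkk).mpr h4
      have h6 : Real.exp (4*β) = e * e := by
        rw [he_def, ← Real.exp_add]; ring_nf
      rw [h6] at h5
      nlinarith [hepos, hprod]
    have hDne : (κ * κ' * e - ei) ≠ 0 := hD.ne'
    have hβ2' : β < -(1/2) * Real.log κ := hβ2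
    -- κ e < 1
    have hke : κ * e < 1 := by
      have : Real.exp (2*β) < Real.exp (-Real.log κ) :=
        Real.exp_lt_exp.mpr (by linarith)
      rw [Real.exp_neg, Real.exp_log h0] at this
      calc κ * e < κ * κ⁻¹ := by exact (mul_lt_mul_iff_right₀ h0).mpr this
      _ = 1 := by field_simp
    refine ⟨hD, ?_⟩
    intro K K' K''
    have hA : Real.exp (2*K) = (κ' - κ) / (κ * κ' * e - ei) := by
      show Real.exp (2 * ((1/2) * Real.log _)) = _
      rw [show (2:ℝ) * ((1/2) * Real.log ((κ' - κ) / (κ * κ' * e - ei)))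
          = Real.log ((κ' - κ) / (κ * κ' * e - ei)) by ring]
      exact Real.exp_log (div_pos (by linarith) hD)
    have hK'' : Real.exp (2*K'') = κ * e := by
      show Real.exp (2 * (β + (1/2) * Real.log κ)) = _
      rw [show (2:ℝ) * (β + (1/2) * Real.log κ) = Real.log κ + 2*β by ring,
        Real.exp_add, Real.exp_log h0]
    constructor
    · show Real.exp (2*(β + (1/2) * Real.log κ - β)) = κ
      rw [show (2:ℝ) * (β + (1/2) * Real.log κ - β) = Real.log κ by ring]
      exact Real.exp_log h0
    · have hKsum : Real.exp (2*(K+K'')) = Real.exp (2*K) * Real.exp (2*K'') := by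
        rw [← Real.exp_add]; ring_nf
      have hden : Real.exp (2*(K+K'')) - 1 ≠ 0 := by
        rw [hKsum, hA, hK'']
        have : (κ' - κ) / (κ * κ' * e - ei) * (κ * e) - 1
            = (ei - κ*κ*e) / (κ * κ' * e - ei) := by
          rw [div_mul_eq_mul_div, div_sub_one hDne]; ring
        rw [this]
        have hnum : 0 < ei - κ*κ*e := by nlinarith [hprod, mul_pos h0 hepos]
        positivity
      show Real.exp (-2*β) * (Real.exp (2*K) - Real.exp (2*K'')) /
        (Real.exp (2*(K+K'')) - 1) = κ'
      rw [div_eq_iff hden, hKsum, hA, hK'']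
      have hAeq : (κ' - κ) / (κ * κ' * e - ei) * (κ * κ' * e - ei) = κ' - κ :=
        div_mul_cancel₀ _ hDne
      rw [← hei_def]
      linear_combination -hAeq - κ * hprod
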